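/- arXiv:2503.02052 — 2 statements merged into one kernel-verified Lean document; each statement's English description precedes it below -/
import Mathlib

section
/- Let C be a triangulated category with a bounded t-structure with heart A, and suppose G ∈ C is a classical generator (its thick closure is all of C). Then G' := ⊕_{i ∈ ℤ} H^i(G) (a finite direct sum since the t-structure is bounded) is a generator of A, i.e., G' is not contained in any proper Serre subcategory of A. -/
open CategoryTheory CategoryTheory.Limits CategoryTheory.Pretriangulated

universe v u v' u'

section TriangulatedDefs

variable (T : Type u) [Category.{v} T] [HasZeroObject T] [Preadditive T] [HasShift T ℤ]
  [∀ n : ℤ, (shiftFunctor T n).Additive] [Pretriangulated T]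

/-- A (strictly full) triangulated subcategory, as a predicate on objects. -/
structure IsTriangulatedSub (P : Set T) : Prop where
  zero : ∀ X : T, IsZero X → X ∈ P
  iso : ∀ {X Y : T}, (X ≅ Y) → X ∈ P → Y ∈ P
  shift : ∀ (X : T) (n : ℤ), X ∈ P → (X⟦n⟧ : T) ∈ P
  ext₂ : ∀ Tr : Triangle T, Tr ∈ (distTriang T) → Tr.obj₁ ∈ P → Tr.obj₃ ∈ P → Tr.obj₂ ∈ P

/-- A thick triangulated subcategory: also closed under direct summands (retracts). -/
structure IsThickSub (P : Set T) extends IsTriangulatedSub T P : Prop where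
  summand : ∀ {X Y : T} (i : X ⟶ Y) (r : Y ⟶ X), i ≫ r = 𝟙 X → Y ∈ P → X ∈ P

/-- The thick closure of a set of objects: the smallest thick full triangulated
subcategory containing it. -/
def thickClosure (S : Set T) : Set T :=
  {X | ∀ P : Set T, IsThickSub T P → S ⊆ P → X ∈ P}

/-- The smallest full triangulated subcategory containing a set of objects. -/
def triangClosure (S : Set T) : Set T :=
  {X | ∀ P : Set T, IsTriangulatedSub T P → S ⊆ P → X ∈ P}

/-- A classical generator: an object whose thick closure is the whole category. -/
def IsClassicalGenerator (G : T) : Prop := ∀ X : T, X ∈ thickClosure T {G}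

end TriangulatedDefs

section SerreDefs

variable (A : Type u') [Category.{v'} A] [Abelian A]

/-- A Serre subcategory of an abelian category, as a predicate on objects:
closed under subobjects, quotient objects and extensions. -/
structure IsSerreSub (P : Set A) : Prop where
  zero : ∀ X : A, IsZero X → X ∈ P
  subobj : ∀ {X Y : A} (f : X ⟶ Y), Mono f → Y ∈ P → X ∈ P
  quot : ∀ {X Y : A} (f : X ⟶ Y), Epi f → X ∈ P → Y ∈ P
  extension : ∀ S : ShortComplex A, S.ShortExact → S.X₁ ∈ P → S.X₃ ∈ P → S.X₂ ∈ P

/-- The Serre subcategory generated by a set of objects. -/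
def serreClosure (S : Set A) : Set A :=
  {X | ∀ P : Set A, IsSerreSub A P → S ⊆ P → X ∈ P}

/-- A generator of an abelian category: an object not contained in any proper
Serre subcategory. -/
def IsAbGenerator (G : A) : Prop :=
  ∀ P : Set A, IsSerreSub A P → P ≠ Set.univ → G ∉ P

end SerreDefs

section THeart

variable (T : Type u) [Category.{v} T] [HasZeroObject T] [Preadditive T] [HasShift T ℤ]
  [∀ n : ℤ, (shiftFunctor T n).Additive] [Pretriangulated T]
variable (A : Type u') [Category.{v'} A] [Abelian A]

/-- A bounded t-structure on the triangulated category `T`, together with an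
identification of its heart with the abelian category `A` and the associated
cohomology functors `H i : T ⥤ A` (with their long exact sequences). -/
structure BoundedTHeart where
  /-- the underlying t-structure -/
  t : Triangulated.TStructure T
  /-- the t-structure is bounded -/
  bounded : ∀ X : T, ∃ n : ℕ, t.le (n : ℤ) X ∧ t.ge (-(n : ℤ)) X
  /-- the inclusion of the heart -/
  ι : A ⥤ T
  ι_full : ι.Full
  ι_faithful : ι.Faithful
  ι_heart : ∀ a : A, t.le 0 (ι.obj a) ∧ t.ge 0 (ι.obj a)
  ι_essSurj : ∀ X : T, t.le 0 X → t.ge 0 X → ∃ a : A, Nonempty (ι.obj a ≅ X)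
  /-- the cohomology functors of the t-structure -/
  H : ℤ → T ⥤ A
  H_additive : ∀ i : ℤ, (H i).Additive
  H_heart : ∀ a : A, Nonempty ((H 0).obj (ι.obj a) ≅ a)
  H_heart_zero : ∀ (a : A) (i : ℤ), i ≠ 0 → IsZero ((H i).obj (ι.obj a))
  H_shift : ∀ (i j : ℤ) (X : T), Nonempty ((H i).obj (X⟦j⟧) ≅ (H (i + j)).obj X)
  H_LE_iff : ∀ (n : ℤ) (X : T), t.le n X ↔ ∀ i : ℤ, n < i → IsZero ((H i).obj X)
  H_GE_iff : ∀ (n : ℤ) (X : T), t.ge n X ↔ ∀ i : ℤ, i < n → IsZero ((H i).obj X)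
  /-- connecting morphisms of the long exact cohomology sequence of a triangle -/
  δ : ∀ (Tr : Triangle T), Tr ∈ (distTriang T) → ∀ i : ℤ,
    ((H i).obj Tr.obj₃ ⟶ (H (i + 1)).obj Tr.obj₁)
  les₁ : ∀ (Tr : Triangle T) (_ : Tr ∈ (distTriang T)) (i : ℤ),
    ∃ w : (H i).map Tr.mor₁ ≫ (H i).map Tr.mor₂ = 0, (ShortComplex.mk _ _ w).Exact
  les₂ : ∀ (Tr : Triangle T) (hTr : Tr ∈ (distTriang T)) (i : ℤ),
    ∃ w : (H i).map Tr.mor₂ ≫ δ Tr hTr i = 0, (ShortComplex.mk _ _ w).Exact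
  les₃ : ∀ (Tr : Triangle T) (hTr : Tr ∈ (distTriang T)) (i : ℤ),
    ∃ w : δ Tr hTr i ≫ (H (i + 1)).map Tr.mor₁ = 0, (ShortComplex.mk _ _ w).Exact

variable {T A}

/-- The full subcategory of objects of `T` all of whose cohomologies (with respect to
the given bounded t-structure) lie in the subcategory `A'` of the heart. -/
def BoundedTHeart.cohIn (B : BoundedTHeart T A) (A' : Set A) : Set T :=
  {E : T | ∀ i : ℤ, (B.H i).obj E ∈ A'}

end THeart

variable {T : Type u} [Category.{v} T] [HasZeroObject T] [Preadditive T] [HasShift T ℤ]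
  [∀ n : ℤ, (shiftFunctor T n).Additive] [Pretriangulated T]
variable {A : Type u'} [Category.{v'} A] [Abelian A]

attribute [local instance] CategoryTheory.Abelian.hasFiniteBiproducts

lemma serre_iso {P : Set A} (hP : IsSerreSub A P) {X Y : A} (e : X ≅ Y) (hX : X ∈ P) : Y ∈ P :=
  hP.subobj e.inv inferInstance hX

lemma serre_retract {P : Set A} (hP : IsSerreSub A P) {X Y : A} (i : X ⟶ Y) (r : Y ⟶ X)
    (h : i ≫ r = 𝟙 X) (hY : Y ∈ P) : X ∈ P := by
  haveI : IsSplitMono i := IsSplitMono.mk' ⟨r, h⟩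
  exact hP.subobj i inferInstance hY

lemma serre_exact {P : Set A} (hP : IsSerreSub A P) {X₁ X₂ X₃ : A} (f : X₁ ⟶ X₂) (g : X₂ ⟶ X₃)
    (w : f ≫ g = 0) (h : (ShortComplex.mk f g w).Exact) (h₁ : X₁ ∈ P) (h₃ : X₃ ∈ P) :
    X₂ ∈ P := by
  have hker : kernel g ∈ P := by
    have hepi : Epi (ShortComplex.mk f g w).toCycles :=
      (ShortComplex.exact_iff_epi_toCycles _).1 h
    have hcyc : (ShortComplex.mk f g w).cycles ∈ P := hP.quot _ hepi h₁
    exact serre_iso hP (ShortComplex.cyclesIsoKernel _) hcyc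
  have hcoim : Abelian.coimage g ∈ P :=
    hP.subobj (Abelian.factorThruCoimage g) inferInstance h₃
  have hse : (ShortComplex.mk (kernel.ι g) (cokernel.π (kernel.ι g))
      (cokernel.condition _)).ShortExact := by
    refine ShortComplex.ShortExact.mk' ?_ inferInstance inferInstance
    exact ShortComplex.exact_of_g_is_cokernel _ (cokernelIsCokernel _)
  exact hP.extension _ hse hker hcoim

/-- if `G` is a classical generator of `C`, then
`G' = ⊕ᵢ H^i(G)` (a finite direct sum, by boundedness) is a generator of the heart `A`,
i.e. `G'` lies in no proper Serre subcategory of `A`. -/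
theorem stmt5 (B : BoundedTHeart T A) (G : T) (hG : IsClassicalGenerator T G)
    (s : Finset ℤ) (hs : ∀ i : ℤ, i ∉ s → IsZero ((B.H i).obj G))
    (G' : A) (hG' : Nonempty (G' ≅ ⨁ fun i : s => (B.H (i : ℤ)).obj G)) :
    IsAbGenerator A G' := by
  intro P hP hne hG'P
  apply hne
  obtain ⟨e⟩ := hG'
  have hHiG : ∀ i : ℤ, (B.H i).obj G ∈ P := by
    intro i
    by_cases hi : i ∈ s
    · exact serre_retract hP (biproduct.ι (fun j : s => (B.H (j : ℤ)).obj G) ⟨i, hi⟩ ≫ e.inv)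
        (e.hom ≫ biproduct.π (fun j : s => (B.H (j : ℤ)).obj G) ⟨i, hi⟩) (by simp) hG'P
    · exact hP.zero _ (hs i hi)
  have hthick : IsThickSub T (B.cohIn P) := by
    refine ⟨⟨?_, ?_, ?_, ?_⟩, ?_⟩
    · intro X hX i
      haveI := B.H_additive i
      exact hP.zero _ ((B.H i).map_isZero hX)
    · intro X Y e hX i
      exact serre_iso hP ((B.H i).mapIso e) (hX i)
    · intro X n hX i
      exact serre_iso hP (B.H_shift i n X).some.symm (hX (i + n))
    · intro Tr hTr h₁ h₃ i
      obtain ⟨w₁, e₁⟩ := B.les₁ Tr hTr i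
      exact serre_exact hP _ _ w₁ e₁ (h₁ i) (h₃ i)
    · intro X Y i r h hY j
      haveI := B.H_additive j
      exact serre_retract hP ((B.H j).map i) ((B.H j).map r)
        (by rw [← (B.H j).map_comp, h, (B.H j).map_id]) (hY j)
  have hall : ∀ X : T, X ∈ B.cohIn P := fun X =>
    hG X _ hthick (Set.singleton_subset_iff.2 hHiG)
  apply Set.eq_univ_of_forall
  intro a
  exact serre_iso hP (B.H_heart a).some (hall (B.ι.obj a) 0)
end

section
/- Let A be an abelian category in which every object is Noetherian (every ascending chain of subobjects stabilizes). Then the Krull–Gabriel dimension of A is defined, i.e., there exists an ordinal α with A = A_{≤ α} in the Krull–Gabriel filtration. -/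
open CategoryTheory CategoryTheory.Limits CategoryTheory.Pretriangulated

universe v u v' u'

section KrullGabriel

variable (A : Type u') [Category.{v'} A] [Abelian A]

/-- `X` is simple modulo the Serre subcategory `P`, i.e. `X` becomes a simple object
in the Serre quotient `A/P`: it is nonzero in the quotient, and every subobject of `X`
becomes either zero or all of `X` in the quotient. -/
def SimpleModulo (P : Set A) (X : A) : Prop :=
  X ∉ P ∧ ∀ Y : Subobject X, ((Y : A) ∈ P ∨ Limits.cokernel Y.arrow ∈ P)

/-- The Krull-Gabriel filtration of an abelian category (indexed so that `A_{≤ -1} = 0`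
corresponds to the empty stage): at a non-limit ordinal `α`, `KGFilt A α` is the Serre
subcategory generated by the previous stages together with the objects that become
simple in the Serre quotient by the previous stage; at a limit ordinal it is the union
of the previous stages. -/
noncomputable def KGFilt (α : Ordinal.{u'}) : Set A :=
  letI := Classical.propDecidable (Order.IsSuccLimit α)
  if Order.IsSuccLimit α then
    {X | ∃ β : Ordinal.{u'}, ∃ _ : β < α, X ∈ KGFilt β}
  else
    serreClosure A
      ({X | SimpleModulo A (serreClosure A {Y | ∃ β : Ordinal.{u'}, ∃ _ : β < α, Y ∈ KGFilt β}) X}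
        ∪ {Y | ∃ β : Ordinal.{u'}, ∃ _ : β < α, Y ∈ KGFilt β})
termination_by α

/-- The Krull-Gabriel dimension of `A` is defined iff the filtration exhausts `A`. -/
def KGdimDefined : Prop := ∃ α : Ordinal.{u'}, KGFilt A α = Set.univ

/-- The Krull-Gabriel dimension: the least ordinal at which the filtration exhausts `A`. -/
noncomputable def KGdim : Ordinal.{u'} := sInf {α : Ordinal.{u'} | KGFilt A α = Set.univ}

end KrullGabriel


section Aux2

variable {A : Type u'} [Category.{v'} A] [Abelian A]

lemma subset_serreClosure (S : Set A) : S ⊆ serreClosure A S :=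
  fun _ hX _ _ hSP => hSP hX

lemma isSerreSub_serreClosure (S : Set A) : IsSerreSub A (serreClosure A S) where
  zero X hX P hP _ := hP.zero X hX
  subobj f hf hY P hP hSP := hP.subobj f hf (hY P hP hSP)
  quot f hf hX P hP hSP := hP.quot f hf (hX P hP hSP)
  extension S' hS' h1 h3 P hP hSP := hP.extension S' hS' (h1 P hP hSP) (h3 P hP hSP)

lemma serreClosure_eq_self {P : Set A} (h : IsSerreSub A P) : serreClosure A P = P :=
  le_antisymm (fun _ hX => hX P h subset_rfl) (subset_serreClosure P)

/-- The successor-step operation of the Krull-Gabriel filtration. -/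
def KGStep (U : Set A) : Set A :=
  serreClosure A ({X | SimpleModulo A (serreClosure A U) X} ∪ U)

lemma KGFilt_limit {α : Ordinal.{u'}} (hα : Order.IsSuccLimit α) :
    KGFilt A α = {X | ∃ β : Ordinal.{u'}, ∃ _ : β < α, X ∈ KGFilt A β} := by
  rw [KGFilt]
  exact if_pos hα

lemma KGFilt_not_limit {α : Ordinal.{u'}} (hα : ¬ Order.IsSuccLimit α) :
    KGFilt A α = KGStep (A := A) {Y | ∃ β : Ordinal.{u'}, ∃ _ : β < α, Y ∈ KGFilt A β} := by
  rw [KGFilt]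
  exact if_neg hα

lemma subset_KGStep (U : Set A) : U ⊆ KGStep U :=
  fun X hX => subset_serreClosure _ (Or.inr hX)

lemma KGFilt_mono {β α : Ordinal.{u'}} (h : β < α) : KGFilt A β ⊆ KGFilt A α := by
  by_cases hα : Order.IsSuccLimit α
  · rw [KGFilt_limit hα]
    exact fun X hX => ⟨β, h, hX⟩
  · rw [KGFilt_not_limit hα]
    exact fun X hX => subset_KGStep _ ⟨β, h, hX⟩

lemma KGFilt_mono_le {β α : Ordinal.{u'}} (h : β ≤ α) : KGFilt A β ⊆ KGFilt A α := by
  rcases lt_or_eq_of_le h with h | h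
  · exact KGFilt_mono h
  · rw [h]

lemma KGFilt_union_succ (δ : Ordinal.{u'}) :
    {Y : A | ∃ β : Ordinal.{u'}, ∃ _ : β < δ + 1, Y ∈ KGFilt A β} = KGFilt A δ := by
  apply le_antisymm
  · rintro Y ⟨β, hβ, hY⟩
    rw [Ordinal.add_one_eq_succ, Order.lt_succ_iff] at hβ
    exact KGFilt_mono_le hβ hY
  · intro Y hY
    refine ⟨δ, ?_, hY⟩
    rw [Ordinal.add_one_eq_succ]
    exact Order.lt_succ δ

end Aux2

variable {A : Type u'} [Category.{v'} A] [Abelian A]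


section Aux3

variable {A : Type u'} [Category.{v'} A] [Abelian A]

lemma IsSerreSub.mem_of_iso {P : Set A} (hP : IsSerreSub A P) {X Y : A} (e : X ≅ Y)
    (hY : Y ∈ P) : X ∈ P :=
  hP.subobj e.hom inferInstance hY

/-- In a Noetherian abelian category, every proper Serre subcategory admits an object
which is simple modulo it. -/
lemma exists_simpleModulo (hN : ∀ X : A, WellFoundedGT (Subobject X))
    {P : Set A} (hP : IsSerreSub A P) (hne : P ≠ Set.univ) :
    ∃ X : A, SimpleModulo A P X := by
  obtain ⟨X, hX⟩ : ∃ X : A, X ∉ P := by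
    by_contra hc
    push_neg at hc
    exact hne (Set.eq_univ_of_forall hc)
  -- the set of subobjects with quotient not in `P`
  set T : Set (Subobject X) := {Y | Limits.cokernel Y.arrow ∉ P} with hT
  have hbot : (⊥ : Subobject X) ∈ T := by
    intro hmem
    apply hX
    have e : Limits.cokernel (⊥ : Subobject X).arrow ≅ X :=
      Limits.cokernelIsoOfEq Subobject.bot_arrow ≪≫ Limits.cokernelZeroIsoTarget
    exact hP.mem_of_iso e.symm hmem
  obtain ⟨Y, hY, hmax⟩ := (hN X).wf.has_min T ⟨⊥, hbot⟩
  refine ⟨Limits.cokernel Y.arrow, hY, fun Z => ?_⟩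
  by_cases hZ : Limits.cokernel Z.arrow ∈ P
  · exact Or.inr hZ
  · left
    set π : X ⟶ Limits.cokernel Y.arrow := Limits.cokernel.π Y.arrow with hπ
    set pb := Limits.pullback Z.arrow π with hpb
    set W : Subobject X := Subobject.mk (Limits.pullback.snd Z.arrow π) with hW
    have hWarr : W.arrow = (Subobject.underlyingIso _).hom ≫ Limits.pullback.snd Z.arrow π := by
      rw [← Subobject.underlyingIso_hom_comp_eq_mk]
    -- the comparison map between quotients
    have hzero : W.arrow ≫ π ≫ Limits.cokernel.π Z.arrow = 0 := by
      rw [hWarr]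
      simp only [Category.assoc, ← Limits.pullback.condition_assoc]
      simp
    have hzero' : W.arrow ≫ (π ≫ Limits.cokernel.π Z.arrow) = 0 := by
      simpa using hzero
    set φ : Limits.cokernel W.arrow ⟶ Limits.cokernel Z.arrow :=
      Limits.cokernel.desc W.arrow (π ≫ Limits.cokernel.π Z.arrow) hzero' with hφ
    have hepiφ : Epi φ := by
      have h1 : Limits.cokernel.π W.arrow ≫ φ = π ≫ Limits.cokernel.π Z.arrow := by
        simp [hφ]
      have : Epi (Limits.cokernel.π W.arrow ≫ φ) := by
        rw [h1]; exact epi_comp _ _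
      exact epi_of_epi (Limits.cokernel.π W.arrow) φ
    have hWT : W ∈ T := by
      intro hmem
      exact hZ (hP.quot φ hepiφ hmem)
    -- maximality gives `Y = W`
    have hYW : Y ≤ W := by
      refine Subobject.le_mk_of_comm (Limits.pullback.lift 0 Y.arrow ?_) ?_
      · simp [hπ]
      · exact Limits.pullback.lift_snd _ _ _
    have hEq : Y = W := by
      by_contra hne'
      exact hmax W hWT (lt_of_le_of_ne hYW hne')
    have hWπ : W.arrow ≫ π = 0 := by
      rw [← hEq]
      simp [hπ]
    have hsndπ : Limits.pullback.snd Z.arrow π ≫ π = 0 := by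
      have := Subobject.underlyingIso_arrow (Limits.pullback.snd Z.arrow π)
      calc Limits.pullback.snd Z.arrow π ≫ π
          = ((Subobject.underlyingIso _).inv ≫ W.arrow) ≫ π := by rw [this]
        _ = (Subobject.underlyingIso _).inv ≫ (W.arrow ≫ π) := by simp
        _ = 0 := by rw [hWπ]; simp
    have hfst0 : Limits.pullback.fst Z.arrow π = 0 := by
      have h2 : Limits.pullback.fst Z.arrow π ≫ Z.arrow = 0 := by
        rw [Limits.pullback.condition, hsndπ]
      rw [← cancel_mono Z.arrow, h2, Limits.zero_comp]
    have hfstepi : Epi (Limits.pullback.fst Z.arrow π) := inferInstance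
    rw [hfst0] at hfstepi
    have hZzero : Limits.IsZero (Z : A) := @Limits.IsZero.of_epi_zero _ _ _ _ _ hfstepi
    exact hP.zero _ hZzero

end Aux3

/-- if every object of the abelian category `A` is Noetherian (ascending
chain condition on subobjects), then the Krull-Gabriel dimension of `A` is defined. -/
theorem stmt7 (h : ∀ X : A, WellFoundedGT (Subobject X)) :
    ∃ α : Ordinal.{u'}, KGFilt A α = Set.univ := by
  -- the filtration cannot be strictly increasing at every ordinal
  obtain ⟨β, γ, hlt, heq⟩ : ∃ β γ : Ordinal.{u'}, β < γ ∧ KGFilt A β = KGFilt A γ := by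
    by_contra hc
    push_neg at hc
    have hinj : Function.Injective (KGFilt A) := by
      intro β γ hβγ
      rcases lt_trichotomy β γ with h1 | h1 | h1
      · exact absurd hβγ (hc _ _ h1)
      · exact h1
      · exact absurd hβγ.symm (hc _ _ h1)
    exact not_small_ordinal.{u'} (small_of_injective hinj)
  have h1 : KGFilt A (β + 1) = KGFilt A β := by
    apply le_antisymm
    · have : β + 1 ≤ γ := by
        rw [Ordinal.add_one_eq_succ]
        exact Order.succ_le_of_lt hlt
      rw [heq]
      exact KGFilt_mono_le this
    · apply KGFilt_mono
      rw [Ordinal.add_one_eq_succ]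
      exact Order.lt_succ β
  refine ⟨β + 1, ?_⟩
  have hnotlim : ∀ δ : Ordinal.{u'}, ¬ Order.IsSuccLimit (δ + 1) := by
    intro δ
    rw [Ordinal.add_one_eq_succ]
    exact Order.not_isSuccLimit_succ δ
  have h2' : KGFilt A (β + 1) = KGStep (A := A) (KGFilt A β) := by
    rw [KGFilt_not_limit (hnotlim β), KGFilt_union_succ]
  have hPserre : IsSerreSub A (KGFilt A (β + 1)) := by
    rw [h2']
    exact isSerreSub_serreClosure _
  have h4 : KGFilt A (β + 1 + 1) = KGStep (A := A) (KGFilt A (β + 1)) := by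
    rw [KGFilt_not_limit (hnotlim (β + 1)), KGFilt_union_succ]
  have h2 : KGFilt A (β + 1 + 1) = KGFilt A (β + 1) := by
    rw [h4, h1, ← h2']
    exact h1
  have h3 : {X : A | SimpleModulo A (KGFilt A (β + 1)) X} ⊆ KGFilt A (β + 1) := by
    intro X hX
    rw [← h2, h4]
    apply subset_serreClosure
    left
    rw [Set.mem_setOf_eq, serreClosure_eq_self hPserre]
    exact hX
  by_contra hne
  obtain ⟨X, hX⟩ := exists_simpleModulo h hPserre hne
  exact hX.1 (h3 hX)
end
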